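/- Let ε = 7/10. Define, for α ∈ [0, 1/2], with a ∗ b = (1 − a)b + a(1 − b), h₂(x) = −x·log₂ x − (1 − x)·log₂(1 − x) (where 0·log₂ 0 = 0), H(p₁,…,p₄) = −Σᵢ pᵢ·log₂ pᵢ, and Δ(α) = ε²/16 − α(1 − α)·ε·(1 − 3ε/4) + (1 − ε)/4: R(α) = 1 − h₂(α ∗ ε/2) and R'(α) = h₂(α) + h₂(α ∗ ε/2) − H(α·ε/2, (1 − α)·ε/2, 1/2 − ε/4 − √Δ(α), 1/2 − ε/4 + √Δ(α)). Let C = 1 − h₂(ε/2) and C_E = 2 − H(ε/4, ε/4, ε/4, 1 − 3ε/4). Then there exists α ∈ (0, 1/2) such that 0 < R(α) < C and R'(α) > (1 − R(α)/C)·C_E. -/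

import Mathlib

set_option maxHeartbeats 1000000


lemma logb_rat_bound (x s : ℝ) (m k : ℕ) (hx : 0 < x) (hm : 0 < m)
    (hs : x ^ m * 2 ^ k = s) (h1 : 1 ≤ s) :
    ((s - 1) / (s * 0.6931471808) - k) / m ≤ Real.logb 2 x ∧
      Real.logb 2 x ≤ ((s - 1) / 0.6931471803 - k) / m := by
  have hl2 : (0.6931471803 : ℝ) < Real.log 2 := Real.log_two_gt_d9
  have hu2 : Real.log 2 < 0.6931471808 := Real.log_two_lt_d9
  have h2pos : (0:ℝ) < Real.log 2 := by linarith
  have hs0 : (0:ℝ) < s := lt_of_lt_of_le one_pos h1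
  have hlogs : Real.log s = m * Real.log x + k * Real.log 2 := by
    rw [← hs, Real.log_mul (by positivity) (by positivity), Real.log_pow, Real.log_pow]
  have hsu : Real.log s ≤ s - 1 := by
    have := Real.log_le_sub_one_of_pos hs0; linarith
  have hsl : (s - 1) / s ≤ Real.log s := by
    have h := Real.log_le_sub_one_of_pos (show (0:ℝ) < 1/s from div_pos one_pos hs0)
    rw [Real.log_div one_ne_zero (ne_of_gt hs0), Real.log_one] at h
    have e : (1:ℝ)/s - 1 = -((s-1)/s) := by field_simp; ring
    rw [e] at h; linarith
  have hsnn : (0:ℝ) ≤ Real.log s := le_trans (div_nonneg (by linarith) hs0.le) hsl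
  have key : Real.logb 2 x = (Real.log s / Real.log 2 - k) / m := by
    rw [Real.logb, hlogs]
    field_simp
    ring
  rw [key]
  constructor
  · gcongr ((?_ : ℝ) - _) / _
    calc (s - 1) / (s * 0.6931471808) = ((s-1)/s) / 0.6931471808 := by ring
      _ ≤ Real.log s / 0.6931471808 := by gcongr
      _ ≤ Real.log s / Real.log 2 := by gcongr
  · gcongr ((?_ : ℝ) - _) / _
    calc Real.log s / Real.log 2 ≤ Real.log s / 0.6931471803 := by gcongr
      _ ≤ (s - 1) / 0.6931471803 := by gcongr




/-- Binary convolution `a ∗ b = (1 − a)b + a(1 − b)`. -/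
noncomputable def binConv (a b : ℝ) : ℝ := (1 - a) * b + a * (1 - b)

/-- Binary entropy (base 2); `Real.logb 2 0 = 0`, so `0 · log₂ 0 = 0`. -/
noncomputable def binEnt (x : ℝ) : ℝ :=
  -(x * Real.logb 2 x) - (1 - x) * Real.logb 2 (1 - x)

/-- Shannon entropy (base 2) of a probability four-vector. -/
noncomputable def shannonEnt4 (p₁ p₂ p₃ p₄ : ℝ) : ℝ :=
  -(p₁ * Real.logb 2 p₁) - p₂ * Real.logb 2 p₂
    - p₃ * Real.logb 2 p₃ - p₄ * Real.logb 2 p₄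

/-- For the entanglement-breaking depolarizing channel with `ε = 0.7`, quantum
superposition coding strictly outperforms time division: some `α ∈ (0, 1/2)`
gives a rate pair above the time-division line. -/
theorem depolarizing_beats_time_division :
    let ε : ℝ := 7 / 10
    let Δ : ℝ → ℝ := fun α =>
      ε ^ 2 / 16 - α * (1 - α) * ε * (1 - 3 * ε / 4) + (1 - ε) / 4
    let R : ℝ → ℝ := fun α => 1 - binEnt (binConv α (ε / 2))
    let R' : ℝ → ℝ := fun α =>
      binEnt α + binEnt (binConv α (ε / 2))
        - shannonEnt4 (α * ε / 2) ((1 - α) * ε / 2)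
            (1 / 2 - ε / 4 - Real.sqrt (Δ α)) (1 / 2 - ε / 4 + Real.sqrt (Δ α))
    let C : ℝ := 1 - binEnt (ε / 2)
    let CE : ℝ := 2 - shannonEnt4 (ε / 4) (ε / 4) (ε / 4) (1 - 3 * ε / 4)
    ∃ α : ℝ, α ∈ Set.Ioo (0 : ℝ) (1 / 2) ∧
      0 < R α ∧ R α < C ∧ R' α > (1 - R α / C) * CE := by
  show ∃ α : ℝ, α ∈ Set.Ioo (0 : ℝ) (1 / 2) ∧
      0 < 1 - binEnt (binConv α (7 / 10 / 2)) ∧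
      1 - binEnt (binConv α (7 / 10 / 2)) < 1 - binEnt (7 / 10 / 2) ∧
      binEnt α + binEnt (binConv α (7 / 10 / 2))
        - shannonEnt4 (α * (7 / 10) / 2) ((1 - α) * (7 / 10) / 2)
            (1 / 2 - 7 / 10 / 4 - Real.sqrt ((7 / 10) ^ 2 / 16 - α * (1 - α) * (7 / 10) * (1 - 3 * (7 / 10) / 4) + (1 - 7 / 10) / 4))
            (1 / 2 - 7 / 10 / 4 + Real.sqrt ((7 / 10) ^ 2 / 16 - α * (1 - α) * (7 / 10) * (1 - 3 * (7 / 10) / 4) + (1 - 7 / 10) / 4))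
        > (1 - (1 - binEnt (binConv α (7 / 10 / 2))) / (1 - binEnt (7 / 10 / 2)))
          * (2 - shannonEnt4 (7 / 10 / 4) (7 / 10 / 4) (7 / 10 / 4) (1 - 3 * (7 / 10) / 4))
  have hconv : binConv (1/11) (7 / 10 / 2) = 83/220 := by norm_num [binConv]
  have L1 := logb_rat_bound (1/11) (340282366920938463463374607431768211456/340039485861577398992406882305761986971) 37 128 (by norm_num) (by norm_num) (by norm_num) (by norm_num)
  have L1lo : (-138377265143/40000000000 : ℝ) ≤ Real.logb 2 (1/11) := le_trans (by norm_num) L1.1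
  have L1hi : Real.logb 2 (1/11) ≤ (-691886321739/200000000000 : ℝ) := le_trans L1.2 (by norm_num)
  have L2 := logb_rat_bound (10/11) (1600000000000000000000000000000/1586309297171491574414436704891) 29 4 (by norm_num) (by norm_num) (by norm_num) (by norm_num)
  have L2lo : (-8594084713/62500000000 : ℝ) ≤ Real.logb 2 (10/11) := le_trans (by norm_num) L2.1
  have L2hi : Real.logb 2 (10/11) ≤ (-4296927549/31250000000 : ℝ) := le_trans L2.2 (by norm_num)
  have L3 := logb_rat_bound (83/220) (73723046636895173935245337735387166861186382995150237558658490028576896890621122997719393046635233226635724111210909065751128745556951486655021370085103547000661905766067607320739177172654562484774691578789828781813495765992570923242610784648342818395115352556822123754644863900307414028143456045197895720887942156726824428583271348649103087093489703187280427/72803532818487284039610606367726853193495334865257702179787589092289807020986807081715394110535492962938366459407512494449934362372185378667963666972154111795652442537318383574946271709492501823020290109794543098598040842261980287730693817138671875000000000000000000000000000000000000000000000000000000000000000000000000000000000000000000000000000000000000000) 187 263 (by norm_num) (by norm_num) (by rw [show (263:ℕ) = 200 + 63 by norm_num, pow_add]; norm_num) (by norm_num)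
  have L3lo : (-14063208873/10000000000 : ℝ) ≤ Real.logb 2 (83/220) := le_trans (by norm_num) L3.1
  have L3hi : Real.logb 2 (83/220) ≤ (-1406319671971/1000000000000 : ℝ) := le_trans L3.2 (by norm_num)
  have L4 := logb_rat_bound (137/220) (39599597892005376185821143878297362464473/39141817886985309626240000000000000000000) 19 13 (by norm_num) (by norm_num) (by norm_num) (by norm_num)
  have L4lo : (-683332743689/1000000000000 : ℝ) ≤ Real.logb 2 (137/220) := le_trans (by norm_num) L4.1
  have L4hi : Real.logb 2 (137/220) ≤ (-13666449553/20000000000 : ℝ) := le_trans L4.2 (by norm_num)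
  have L5 := logb_rat_bound (7/20) (7730993719707444524137094407/7629394531250000000000000000) 33 50 (by norm_num) (by norm_num) (by norm_num) (by norm_num)
  have L5lo : (-1514576981439/1000000000000 : ℝ) ≤ Real.logb 2 (7/20) := le_trans (by norm_num) L5.1
  have L5hi : Real.logb 2 (7/20) ≤ (-757284665241/500000000000 : ℝ) := le_trans L5.2 (by norm_num)
  have L6 := logb_rat_bound (13/20) (164400841185494513395503358052498933338333/163840000000000000000000000000000000000000) 37 23 (by norm_num) (by norm_num) (by norm_num) (by norm_num)
  have L6lo : (-310744302077/500000000000 : ℝ) ≤ Real.logb 2 (13/20) := le_trans (by norm_num) L6.1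
  have L6hi : Real.logb 2 (13/20) ≤ (-31074407441/50000000000 : ℝ) := le_trans L6.2 (by norm_num)
  have L7 := logb_rat_bound (7/220) (75561932688615745967132800274795158988486878453941283080217085083648/74841914809896234652262560774028680359135250910185277462005615234375) 39 194 (by norm_num) (by norm_num) (by norm_num) (by norm_num)
  have L7lo : (-4974006481637/1000000000000 : ℝ) ≤ Real.logb 2 (7/220) := le_trans (by norm_num) L7.1
  have L7hi : Real.logb 2 (7/220) ≤ (-2487001545237/500000000000 : ℝ) := le_trans L7.2 (by norm_num)
  have L8 := logb_rat_bound (7/22) (896819112839771466727424/895430243255237372246531) 23 38 (by norm_num) (by norm_num) (by norm_num) (by norm_num)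
  have L8lo : (-1652076771877/1000000000000 : ℝ) ≤ Real.logb 2 (7/22) := le_trans (by norm_num) L8.1
  have L8hi : Real.logb 2 (7/22) ≤ (-413019155301/250000000000 : ℝ) := le_trans L8.2 (by norm_num)
  have L9 := logb_rat_bound (1/22) (340282366920938463463374607431768211456/340039485861577398992406882305761986971) 37 165 (by norm_num) (by norm_num) (by norm_num) (by norm_num)
  have L9lo : (-178377265143/40000000000 : ℝ) ≤ Real.logb 2 (1/22) := le_trans (by norm_num) L9.1
  have L9hi : Real.logb 2 (1/22) ≤ (-891886321739/200000000000 : ℝ) := le_trans L9.2 (by norm_num)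
  have L10 := logb_rat_bound (133/220) (230339304218442143770717/228249336488800000000000) 11 8 (by norm_num) (by norm_num) (by norm_num) (by norm_num)
  have L10lo : (-181520677419/250000000000 : ℝ) ≤ Real.logb 2 (133/220) := le_trans (by norm_num) L10.1
  have L10hi : Real.logb 2 (133/220) ≤ (-45379488329/62500000000 : ℝ) := le_trans L10.2 (by norm_num)
  have L11 := logb_rat_bound (7/40) (7730993719707444524137094407/7629394531250000000000000000) 33 83 (by norm_num) (by norm_num) (by norm_num) (by norm_num)
  have L11lo : (-2514576981439/1000000000000 : ℝ) ≤ Real.logb 2 (7/40) := le_trans (by norm_num) L11.1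
  have L11hi : Real.logb 2 (7/40) ≤ (-1257284665241/500000000000 : ℝ) := le_trans L11.2 (by norm_num)
  have L12 := logb_rat_bound (19/40) (33600614943460448322716069311260139/33554432000000000000000000000000000) 27 29 (by norm_num) (by norm_num) (by norm_num) (by norm_num)
  have L12lo : (-537000315981/500000000000 : ℝ) ≤ Real.logb 2 (19/40) := le_trans (by norm_num) L12.1
  have L12hi : Real.logb 2 (19/40) ≤ (-1074000530879/1000000000000 : ℝ) := le_trans L12.2 (by norm_num)
  have hbc : binEnt (83/220) ≤ 210341219531293/220000000000000 ∧ (210339712211643/220000000000000 : ℝ) ≤ binEnt (83/220) := by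
    simp only [binEnt]
    rw [show (1 - (83:ℝ)/220) = 137/220 by norm_num]
    constructor <;> linarith [L3lo, L3hi, L4lo, L4hi]
  have hbe : binEnt (7/20) ≤ 747255628963/800000000000 ∧ (9340665624017/10000000000000 : ℝ) ≤ binEnt (7/20) := by
    simp only [binEnt]
    rw [show (1 - (7:ℝ)/20) = 13/20 by norm_num]
    constructor <;> linarith [L5lo, L5hi, L6lo, L6hi]
  refine ⟨1/11, by norm_num, ?_, ?_, ?_⟩
  · rw [hconv]
    linarith [hbc.1]
  · rw [hconv, show ((7:ℝ) / 10 / 2) = 7/20 by norm_num]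
    linarith [hbc.2, hbe.1]
  · have hsqrt : Real.sqrt ((7 / 10 : ℝ) ^ 2 / 16 - 1/11 * (1 - 1/11) * (7 / 10) * (1 - 3 * (7 / 10) / 4) + (1 - 7 / 10) / 4) = 123/440 := by
      rw [show ((7 / 10 : ℝ) ^ 2 / 16 - 1/11 * (1 - 1/11) * (7 / 10) * (1 - 3 * (7 / 10) / 4) + (1 - 7 / 10) / 4) = (123/440)^2 by norm_num]
      exact Real.sqrt_sq (by norm_num)
    rw [hconv, hsqrt,
      show ((1:ℝ)/11 * (7 / 10) / 2) = 7/220 by norm_num,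
      show ((1 - (1:ℝ)/11) * (7 / 10) / 2) = 7/22 by norm_num,
      show ((1:ℝ) / 2 - 7 / 10 / 4 - 123/440) = 1/22 by norm_num,
      show ((1:ℝ) / 2 - 7 / 10 / 4 + 123/440) = 133/220 by norm_num,
      show ((7:ℝ) / 10 / 2) = 7/20 by norm_num,
      show ((7:ℝ) / 10 / 4) = 7/40 by norm_num,
      show (1 - 3 * ((7:ℝ) / 10) / 4) = 19/40 by norm_num]
    have hba : binEnt (1/11) ≤ 966897036531/2200000000000 ∧ (7735117479/17600000000 : ℝ) ≤ binEnt (1/11) := by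
      simp only [binEnt]
      rw [show (1 - (1:ℝ)/11) = 10/11 by norm_num]
      constructor <;> linarith [L1lo, L1hi, L2lo, L2hi]
    have hsh : shannonEnt4 (7/220) (7/22) (1/22) (133/220) ≤ 291626736075507/220000000000000 ∧ (14581262618433/11000000000000 : ℝ) ≤ shannonEnt4 (7/220) (7/22) (1/22) (133/220) := by
      simp only [shannonEnt4]
      constructor <;> linarith [L7lo, L7hi, L8lo, L8hi, L9lo, L9hi, L10lo, L10hi]
    have hshE : shannonEnt4 (7/40) (7/40) (7/40) (19/40) ≤ 73212128617497/40000000000000 ∧ (73211966026823/40000000000000 : ℝ) ≤ shannonEnt4 (7/40) (7/40) (7/40) (19/40) := by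
      simp only [shannonEnt4]
      constructor <;> linarith [L11lo, L11hi, L12lo, L12hi]
    have hCpos : (0:ℝ) < 1 - binEnt (7/20) := by linarith [hbe.1]
    rw [gt_iff_lt, show (1 - (1 - binEnt (83/220)) / (1 - binEnt (7/20))) * (2 - shannonEnt4 (7/40) (7/40) (7/40) (19/40))
        = ((1 - binEnt (7/20)) - (1 - binEnt (83/220))) * (2 - shannonEnt4 (7/40) (7/40) (7/40) (19/40)) / (1 - binEnt (7/20)) by
          field_simp, div_lt_iff₀ hCpos]
    calc ((1 - binEnt (7/20)) - (1 - binEnt (83/220))) * (2 - shannonEnt4 (7/40) (7/40) (7/40) (19/40))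
        ≤ (4846575802919/220000000000000 : ℝ) * (6788033973177/40000000000000) := by
          apply mul_le_mul (by linarith [hbc.2, hbe.1]) (by linarith [hshE.2]) (by linarith [hshE.1]) (by norm_num)
      _ < (3850486155909/55000000000000 : ℝ) * (52744371037/800000000000) := by norm_num
      _ ≤ (binEnt (1/11) + binEnt (83/220) - shannonEnt4 (7/220) (7/22) (1/22) (133/220)) * (1 - binEnt (7/20)) := by
          apply mul_le_mul (by linarith [hba.2, hbc.2, hsh.1]) (by linarith [hbe.1]) (by norm_num) (by linarith [hba.2, hbc.2, hsh.1])
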